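/- (Exactness of the memory reduction, S to S−1.) Let S ≥ 2, A₁S ≠ 0, c ∈ ℝ, and suppose x₁, …, x_{S−1} : ℝ → ℝ are continuously differentiable with xᵢ(t) > 0 for all i = 1,…,S−1 and all t ≥ 0. Define y_S(t) := (1/A₁S)·((ẋ₁(t) − b₁·x₁(t))/x₁(t) − Σ_{j=1}^{S−1} A₁ⱼ·xⱼ(t)) and χ_S(t) := c + ∫₀ᵗ [b_S·y_S(τ) + (Σ_{j=1}^{S−1} A_{Sj}·xⱼ(τ) + A_{SS}·y_S(τ))·y_S(τ)] dτ, and suppose that for every i = 1, …, S−1 and t ≥ 0: ẋᵢ(t) = bᵢ·xᵢ(t) + (Σ_{j=1}^{S−1} Aᵢⱼ·xⱼ(t) + A_{iS}·χ_S(t))·xᵢ(t). Then χ_S = y_S on [0,∞), the function x_S := χ_S is differentiable on [0,∞) with x_S(0) = c, and x₁, …, x_S solve the full S-species GLV system on [0,∞). -/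

import Mathlib

/-- (Exactness of the memory reduction, `S` to `S−1`.) If `x 1, …, x (S-1)`
are continuously differentiable, positive on `[0,∞)`, and satisfy the reduced `S−1`-species
system built from the memory term `χ_S`, then `χ_S = y_S` on `[0,∞)`, the function
`x S := χ_S` is differentiable on `[0,∞)` with initial value `c`, and together the `S`
functions solve the full `S`-species GLV system on `[0,∞)`. -/
theorem glvS_memory_reduction_exact
    (S : ℕ) (hS : 2 ≤ S) (b : ℕ → ℝ) (A : ℕ → ℕ → ℝ) (c : ℝ) (hA1S : A 1 S ≠ 0)
    (x : ℕ → ℝ → ℝ)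
    (hdiff : ∀ i ∈ Finset.Icc 1 (S - 1), ContDiff ℝ 1 (x i))
    (hpos : ∀ i ∈ Finset.Icc 1 (S - 1), ∀ t : ℝ, 0 ≤ t → 0 < x i t)
    (yS χS : ℝ → ℝ)
    (hyS : ∀ t : ℝ, yS t = (1 / A 1 S) * ((deriv (x 1) t - b 1 * x 1 t) / x 1 t
      - ∑ j ∈ Finset.Icc 1 (S - 1), A 1 j * x j t))
    (hχS : ∀ t : ℝ, χS t = c + ∫ τ in (0:ℝ)..t,
      (b S * yS τ + ((∑ j ∈ Finset.Icc 1 (S - 1), A S j * x j τ) + A S S * yS τ) * yS τ))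
    (hred : ∀ i ∈ Finset.Icc 1 (S - 1), ∀ t : ℝ, 0 ≤ t →
      deriv (x i) t
        = b i * x i t + ((∑ j ∈ Finset.Icc 1 (S - 1), A i j * x j t) + A i S * χS t) * x i t) :
    (∀ t : ℝ, 0 ≤ t → χS t = yS t) ∧
    DifferentiableOn ℝ χS (Set.Ici 0) ∧
    χS 0 = c ∧
    (∀ i ∈ Finset.Icc 1 (S - 1), ∀ t : ℝ, 0 ≤ t →
      deriv (x i) t
        = b i * x i t + ((∑ j ∈ Finset.Icc 1 (S - 1), A i j * x j t) + A i S * χS t) * x i t) ∧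
    (∀ t : ℝ, 0 ≤ t →
      HasDerivWithinAt χS
        (b S * χS t + ((∑ j ∈ Finset.Icc 1 (S - 1), A S j * x j t) + A S S * χS t) * χS t)
        (Set.Ici 0) t) := by
  have h1mem : (1 : ℕ) ∈ Finset.Icc 1 (S - 1) := by
    simp only [Finset.mem_Icc]; omega
  have hx1pos := hpos 1 h1mem
  -- χS = yS on [0,∞)
  have heq : ∀ t : ℝ, 0 ≤ t → χS t = yS t := by
    intro t ht
    have h := hred 1 h1mem t ht
    have hx : x 1 t ≠ 0 := (hx1pos t ht).ne'
    rw [hyS, h]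
    field_simp
    ring
  -- continuity of yS on [0,∞)
  have hx1 : Continuous (x 1) := (hdiff 1 h1mem).continuous
  have hderiv1 : Continuous (deriv (x 1)) := (hdiff 1 h1mem).continuous_deriv le_rfl
  have hcyS : ContinuousOn yS (Set.Ici 0) := by
    have h1 : ContinuousOn (fun t => (1 / A 1 S) * ((deriv (x 1) t - b 1 * x 1 t) / x 1 t
        - ∑ j ∈ Finset.Icc 1 (S - 1), A 1 j * x j t)) (Set.Ici 0) := by
      refine continuousOn_const.mul (ContinuousOn.sub ?_ ?_)
      · exact ((hderiv1.sub (continuous_const.mul hx1)).continuousOn).div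
          hx1.continuousOn (fun t ht => (hx1pos t ht).ne')
      · exact (continuous_finset_sum _ fun j hj =>
          continuous_const.mul (hdiff j hj).continuous).continuousOn
    exact h1.congr fun t _ => hyS t
  set g : ℝ → ℝ := fun τ => b S * yS τ +
      ((∑ j ∈ Finset.Icc 1 (S - 1), A S j * x j τ) + A S S * yS τ) * yS τ with hg
  have hcg : ContinuousOn g (Set.Ici 0) := by
    refine (continuousOn_const.mul hcyS).add (ContinuousOn.mul (ContinuousOn.add ?_
      (continuousOn_const.mul hcyS)) hcyS)
    exact (continuous_finset_sum _ fun j hj =>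
      continuous_const.mul (hdiff j hj).continuous).continuousOn
  -- interval integrability of g on [0,t] for t ≥ 0
  have hint : ∀ t : ℝ, 0 ≤ t → IntervalIntegrable g MeasureTheory.volume 0 t := by
    intro t ht
    apply ContinuousOn.intervalIntegrable
    rw [Set.uIcc_of_le ht]
    exact hcg.mono (Set.Icc_subset_Ici_self)
  -- derivative of χS within Ici 0
  have hderχ : ∀ t : ℝ, 0 ≤ t →
      HasDerivWithinAt χS (g t) (Set.Ici 0) t := by
    intro t ht
    have hfun : χS = fun u => c + ∫ τ in (0:ℝ)..u, g τ := funext hχS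
    rw [hfun]
    rcases eq_or_lt_of_le ht with h0 | h0
    · -- t = 0
      subst h0
      have hF : HasDerivWithinAt (fun u => ∫ τ in (0:ℝ)..u, g τ) (g 0)
          (Set.Ici (0:ℝ)) 0 := by
        apply intervalIntegral.integral_hasDerivWithinAt_right (hint 0 le_rfl)
          (t := Set.Ioi 0)
        · exact (hcg.mono Set.Ioi_subset_Ici_self).stronglyMeasurableAtFilter_nhdsWithin
            measurableSet_Ioi 0
        · exact (hcg 0 Set.self_mem_Ici).mono Set.Ioi_subset_Ici_self
      exact hF.const_add c
    · -- t > 0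
      have hF : HasDerivAt (fun u => ∫ τ in (0:ℝ)..u, g τ) (g t) t := by
        apply intervalIntegral.integral_hasDerivAt_right (hint t ht)
        · exact ⟨Set.Ici 0, Ici_mem_nhds h0, hcg.aestronglyMeasurable measurableSet_Ici⟩
        · exact hcg.continuousAt (Ici_mem_nhds h0)
      exact (hF.const_add c).hasDerivWithinAt
  refine ⟨heq, ?_, ?_, hred, ?_⟩
  · exact fun t ht => ((hderχ t ht).mono_of_mem_nhdsWithin
      (self_mem_nhdsWithin)).differentiableWithinAt
  · rw [hχS 0, intervalIntegral.integral_same, add_zero]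
  · intro t ht
    have h := hderχ t ht
    rw [heq t ht]
    simpa [hg] using h
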